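/- For integers p > 1 and t, (1/p) · Σ' ζ^t/(1−ζ) = (( (2t−1)/(2p) )), where the primed sum runs over all p-th roots of unity ζ ≠ 1 in ℂ. -/

import Mathlib

open scoped Classical

/-- The Dedekind symbol `((x))`. -/
noncomputable def dedekindSymbol (x : ℝ) : ℝ :=
  if ∃ n : ℤ, x = (n : ℝ) then 0 else Int.fract x - 1/2

/-- The set of `p`-th roots of unity in `ℂ` different from `1`. -/
noncomputable def nontrivialRootsOfUnity (p : ℕ) : Finset ℂ :=
  (Polynomial.nthRoots p (1 : ℂ)).toFinset.erase 1

open Polynomial Finset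

lemma ntru_eq (p : ℕ) : nontrivialRootsOfUnity p = (nthRootsFinset p (1 : ℂ)).erase 1 := by
  rw [nontrivialRootsOfUnity, nthRootsFinset_def]

lemma mem_ntru {p : ℕ} (hp : 0 < p) {ζ : ℂ} :
    ζ ∈ nontrivialRootsOfUnity p ↔ ζ ≠ 1 ∧ ζ ^ p = 1 := by
  rw [ntru_eq, Finset.mem_erase, Polynomial.mem_nthRootsFinset hp 1]

lemma ntru_card {p : ℕ} (hp : 0 < p) : (nontrivialRootsOfUnity p).card = p - 1 := by
  have hμ := Complex.isPrimitiveRoot_exp p hp.ne'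
  rw [ntru_eq, Finset.card_erase_of_mem, hμ.card_nthRootsFinset]
  exact (Polynomial.mem_nthRootsFinset hp 1).2 (one_pow p)

lemma ntru_sum_fun {p : ℕ} (hp : 0 < p) (g : ℂ → ℂ) :
    ∑ ζ ∈ nthRootsFinset p (1 : ℂ), g ζ =
      ∑ k ∈ Finset.range p, g (Complex.exp (2 * Real.pi * Complex.I / p) ^ k) := by
  have hμ := Complex.isPrimitiveRoot_exp p hp.ne'
  set μ := Complex.exp (2 * Real.pi * Complex.I / p) with hμdef
  have himg : nthRootsFinset p (1 : ℂ) = (Finset.range p).image (fun k => μ ^ k) := by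
    ext x
    simp only [Finset.mem_image, Finset.mem_range, Polynomial.mem_nthRootsFinset hp (1 : ℂ)]
    constructor
    · intro hx
      haveI : NeZero p := ⟨hp.ne'⟩
      obtain ⟨k, hk, hkx⟩ := hμ.eq_pow_of_pow_eq_one hx
      exact ⟨k, hk, hkx⟩
    · rintro ⟨k, hk, rfl⟩
      rw [← pow_mul, mul_comm, pow_mul, hμ.pow_eq_one, one_pow]
  rw [himg, Finset.sum_image]
  intro i hi j hj h
  exact hμ.pow_inj (Finset.mem_range.1 hi) (Finset.mem_range.1 hj) h

lemma ntru_sum_pow {p : ℕ} (hp : 0 < p) {j : ℕ} (hj0 : 0 < j) (hjp : j < p) :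
    ∑ ζ ∈ nontrivialRootsOfUnity p, ζ ^ j = -1 := by
  have hμ := Complex.isPrimitiveRoot_exp p hp.ne'
  set μ := Complex.exp (2 * Real.pi * Complex.I / p) with hμdef
  have h1mem : (1 : ℂ) ∈ nthRootsFinset p (1 : ℂ) :=
    (Polynomial.mem_nthRootsFinset hp 1).2 (one_pow p)
  rw [ntru_eq, Finset.sum_erase_eq_sub h1mem, ntru_sum_fun hp (fun ζ => ζ ^ j)]
  have hne : μ ^ j ≠ 1 := hμ.pow_ne_one_of_pos_of_lt hj0.ne' hjp
  have : ∑ k ∈ Finset.range p, (μ ^ k) ^ j = ∑ k ∈ Finset.range p, (μ ^ j) ^ k := by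
    refine Finset.sum_congr rfl fun k _ => ?_
    rw [← pow_mul, ← pow_mul, mul_comm]
  rw [this, geom_sum_eq hne, ← pow_mul, mul_comm, pow_mul, hμ.pow_eq_one, one_pow]
  simp

lemma ntru_sum_inv {p : ℕ} (hp : 1 < p) :
    ∑ ζ ∈ nontrivialRootsOfUnity p, 1 / (1 - ζ) = ((p : ℂ) - 1) / 2 := by
  have hps : 0 < p := lt_trans one_pos hp
  have hmem : ∀ ζ ∈ nontrivialRootsOfUnity p, ζ ≠ 1 ∧ ζ ≠ 0 := by
    intro ζ hζ
    obtain ⟨h1, hpow⟩ := (mem_ntru hps).1 hζ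
    refine ⟨h1, fun h0 => ?_⟩
    rw [h0, zero_pow hps.ne'] at hpow
    exact zero_ne_one hpow
  have hinvmem : ∀ ζ ∈ nontrivialRootsOfUnity p, ζ⁻¹ ∈ nontrivialRootsOfUnity p := by
    intro ζ hζ
    obtain ⟨h1, hpow⟩ := (mem_ntru hps).1 hζ
    refine (mem_ntru hps).2 ⟨fun h => h1 ?_, by rw [inv_pow, hpow, inv_one]⟩
    rw [← inv_inv ζ, h, inv_one]
  have hsym : ∑ ζ ∈ nontrivialRootsOfUnity p, 1 / (1 - ζ)
      = ∑ ζ ∈ nontrivialRootsOfUnity p, 1 / (1 - ζ⁻¹) := by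
    refine Finset.sum_nbij' (fun ζ => ζ⁻¹) (fun ζ => ζ⁻¹) hinvmem hinvmem
      (fun ζ _ => inv_inv ζ) (fun ζ _ => inv_inv ζ) fun ζ hζ => ?_
    rw [inv_inv]
  have hdouble : ∑ ζ ∈ nontrivialRootsOfUnity p, (1 / (1 - ζ) + 1 / (1 - ζ⁻¹))
      = ((nontrivialRootsOfUnity p).card : ℂ) := by
    rw [Finset.sum_congr rfl fun ζ hζ => ?_, Finset.sum_const, nsmul_eq_mul, mul_one]
    obtain ⟨h1, h0⟩ := hmem ζ hζ
    have hne : (1 : ℂ) - ζ ≠ 0 := sub_ne_zero.2 fun h => h1 h.symm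
    have hne' : (1 : ℂ) - ζ⁻¹ ≠ 0 := by
      rw [sub_ne_zero]
      intro h
      exact h1 (by rw [← inv_inv ζ, ← h, inv_one])
    have h2 : ζ - 1 ≠ 0 := sub_ne_zero.2 h1
    have h3 : 1 - ζ⁻¹ = (ζ - 1) / ζ := by field_simp
    rw [h3, one_div_div, div_add_div _ _ hne h2]
    field_simp
    ring
  rw [Finset.sum_add_distrib, ← hsym] at hdouble
  have hcard : ((nontrivialRootsOfUnity p).card : ℂ) = (p : ℂ) - 1 := by
    rw [ntru_card hps]
    rw [Nat.cast_sub hps]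
    push_cast
    ring
  rw [hcard] at hdouble
  linear_combination hdouble / 2

lemma ntru_key {p : ℕ} (hp : 1 < p) {r : ℕ} (hr1 : 1 ≤ r) (hrp : r ≤ p) :
    ∑ ζ ∈ nontrivialRootsOfUnity p, ζ ^ r / (1 - ζ) = ((p : ℂ) - 1) / 2 - (p : ℂ) + r := by
  have hps : 0 < p := lt_trans one_pos hp
  have step : ∀ ζ ∈ nontrivialRootsOfUnity p,
      ζ ^ r / (1 - ζ) = 1 / (1 - ζ) - ∑ j ∈ Finset.range r, ζ ^ j := by
    intro ζ hζ
    obtain ⟨h1, hpow⟩ := (mem_ntru hps).1 hζ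
    have hne : (1 : ℂ) - ζ ≠ 0 := sub_ne_zero.2 fun h => h1 h.symm
    have h2 : ζ - 1 ≠ 0 := sub_ne_zero.2 h1
    rw [geom_sum_eq h1 r]
    field_simp
    ring
  rw [Finset.sum_congr rfl step, Finset.sum_sub_distrib, ntru_sum_inv hp]
  have hin : ∑ ζ ∈ nontrivialRootsOfUnity p, ∑ j ∈ Finset.range r, ζ ^ j
      = (p : ℂ) - r := by
    rw [Finset.sum_comm]
    have h0mem : 0 ∈ Finset.range r := Finset.mem_range.2 hr1
    rw [← Finset.add_sum_erase _ _ h0mem]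
    have hinner : ∀ j ∈ (Finset.range r).erase 0,
        ∑ ζ ∈ nontrivialRootsOfUnity p, ζ ^ j = -1 := by
      intro j hj
      obtain ⟨hj0, hjr⟩ := Finset.mem_erase.1 hj
      exact ntru_sum_pow hps (Nat.pos_of_ne_zero hj0)
        (lt_of_lt_of_le (Finset.mem_range.1 hjr) hrp)
    rw [Finset.sum_congr rfl hinner, Finset.sum_const, Finset.card_erase_of_mem h0mem,
      Finset.card_range]
    simp only [pow_zero, Finset.sum_const, nsmul_eq_mul, mul_one, mul_neg]
    rw [ntru_card hps, Nat.cast_sub hps, Nat.cast_sub hr1]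
    push_cast
    ring
  rw [hin]
  ring

lemma dedekind_add_int (x : ℝ) (n : ℤ) : dedekindSymbol (x + n) = dedekindSymbol x := by
  unfold dedekindSymbol
  have h : (∃ m : ℤ, x + n = (m : ℝ)) ↔ ∃ m : ℤ, x = (m : ℝ) := by
    constructor
    · rintro ⟨m, hm⟩; exact ⟨m - n, by push_cast; linarith⟩
    · rintro ⟨m, hm⟩; exact ⟨m + n, by push_cast; linarith⟩
  rw [if_congr h rfl rfl, Int.fract_add_intCast]

theorem fourier_dedekind_symbol (p : ℕ) (hp : 1 < p) (t : ℤ) :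
    (1 / (p : ℂ)) * ∑ ζ ∈ nontrivialRootsOfUnity p, ζ ^ t / (1 - ζ) =
      (dedekindSymbol ((2 * (t : ℝ) - 1) / (2 * (p : ℝ))) : ℂ) := by
  have hps : 0 < p := lt_trans one_pos hp
  set q : ℤ := (t - 1) / p with hq
  set r : ℕ := ((t - 1) % p).toNat + 1 with hr
  have hpz : (p : ℤ) ≠ 0 := by exact_mod_cast hps.ne'
  have hmod : 0 ≤ (t - 1) % p := Int.emod_nonneg _ hpz
  have hmodlt : (t - 1) % p < p := Int.emod_lt_of_pos _ (by exact_mod_cast hps)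
  have ht : t = p * q + r := by
    have h := Int.mul_ediv_add_emod (t - 1) p
    rw [hr]
    push_cast
    rw [Int.toNat_of_nonneg hmod, hq]
    linarith
  have hr1 : 1 ≤ r := Nat.le_add_left 1 _
  have hrp : r ≤ p := by omega
  have hpowred : ∀ ζ ∈ nontrivialRootsOfUnity p, ζ ^ t = ζ ^ r := by
    intro ζ hζ
    obtain ⟨h1, hpow⟩ := (mem_ntru hps).1 hζ
    have h0 : ζ ≠ 0 := by
      intro h; rw [h, zero_pow hps.ne'] at hpow; exact zero_ne_one hpow
    rw [ht, zpow_add₀ h0, zpow_mul, zpow_natCast, zpow_natCast, hpow, one_zpow, one_mul]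
  rw [Finset.sum_congr rfl fun ζ hζ => by rw [hpowred ζ hζ], ntru_key hp hr1 hrp]
  have hp0 : (p : ℝ) ≠ 0 := Nat.cast_ne_zero.2 hps.ne'
  have htr : (t : ℝ) = p * q + r := by exact_mod_cast ht
  have hxeq : (2 * (t : ℝ) - 1) / (2 * p) = (2 * (r : ℝ) - 1) / (2 * p) + q := by
    rw [htr]; field_simp; ring
  rw [hxeq, dedekind_add_int]
  have hx0 : (0 : ℝ) < (2 * (r : ℝ) - 1) / (2 * p) := by
    apply div_pos
    · have : (1 : ℝ) ≤ (r : ℝ) := by exact_mod_cast hr1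
      linarith
    · positivity
  have hx1 : (2 * (r : ℝ) - 1) / (2 * p) < 1 := by
    rw [div_lt_one (by positivity)]
    have : (r : ℝ) ≤ (p : ℝ) := by exact_mod_cast hrp
    linarith
  have hnoint : ¬∃ n : ℤ, (2 * (r : ℝ) - 1) / (2 * p) = (n : ℝ) := by
    rintro ⟨n, hn⟩
    rw [hn] at hx0 hx1
    have h1 : 0 < n := by exact_mod_cast hx0
    have h2 : n < 1 := by exact_mod_cast hx1
    omega
  rw [dedekindSymbol, if_neg hnoint, Int.fract_eq_self.2 ⟨hx0.le, hx1⟩]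
  have hpc : (p : ℂ) ≠ 0 := Nat.cast_ne_zero.2 hps.ne'
  push_cast
  field_simp
  ring
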